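/- Complementary slackness for the TSc model: if (π, Q, P) is TSc-dual-feasible with scalar κ, (v, u, w) is TSc-primal-feasible with goal price τ, and τ·(∑_{i∈I} Q i + ∑_{r∈R} P r) = ∑_{i∈I} v i · X i o − ∑_{r∈R} u r · Y r o + κ·w, then (∑_{i∈I} v i · X i j − ∑_{r∈R} u r · Y r j + w) · π j = 0 for every j ∈ J, (v i · X i o − τ) · Q i = 0 for every i ∈ I, and (u r · Y r o − τ) · P r = 0 for every r ∈ R. -/
import Mathlib


open Finset

/-- A triple `(π, Q, P)` is TSc-dual-feasible with scalar `κ`. -/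
def TScDualFeasible {I R J : Type*} [Fintype I] [Fintype R] [Fintype J]
    (X : I → J → ℝ) (Y : R → J → ℝ) (o : J) (κ : ℝ)
    (π : J → ℝ) (Q : I → ℝ) (P : R → ℝ) : Prop :=
  (∀ j, 0 ≤ π j) ∧ (∀ i, 0 ≤ Q i) ∧ (∀ r, 0 ≤ P r) ∧
  (∀ i, (∑ j, X i j * π j) + Q i * X i o = X i o) ∧
  (∀ r, -(∑ j, Y r j * π j) + P r * Y r o = -(Y r o)) ∧
  (∑ j, π j = κ)

/-- A triple `(v, u, w)` is TSc-primal-feasible with goal price `τ`. -/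
def TScPrimalFeasible {I R J : Type*} [Fintype I] [Fintype R] [Fintype J]
    (X : I → J → ℝ) (Y : R → J → ℝ) (o : J) (τ : ℝ)
    (v : I → ℝ) (u : R → ℝ) (w : ℝ) : Prop :=
  (∀ j, 0 ≤ (∑ i, v i * X i j) - (∑ r, u r * Y r j) + w) ∧
  (∀ i, τ ≤ X i o * v i) ∧ (∀ r, τ ≤ Y r o * u r)

/-- Complementary slackness for the TSc model. -/
theorem tsc_complementary_slackness
    {I R J : Type*} [Fintype I] [Fintype R] [Fintype J]
    [Nonempty I] [Nonempty R] [Nonempty J]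
    (X : I → J → ℝ) (Y : R → J → ℝ)
    (hX : ∀ i j, 0 < X i j) (hY : ∀ r j, 0 < Y r j)
    (o : J) (τ : ℝ) (hτ : 0 < τ) (κ : ℝ)
    (π : J → ℝ) (Q : I → ℝ) (P : R → ℝ)
    (hdual : TScDualFeasible X Y o κ π Q P)
    (v : I → ℝ) (u : R → ℝ) (w : ℝ)
    (hprimal : TScPrimalFeasible X Y o τ v u w)
    (heq : τ * ((∑ i, Q i) + ∑ r, P r)
      = (∑ i, v i * X i o) - (∑ r, u r * Y r o) + κ * w) :
    (∀ j, ((∑ i, v i * X i j) - (∑ r, u r * Y r j) + w) * π j = 0) ∧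
    (∀ i, (v i * X i o - τ) * Q i = 0) ∧
    (∀ r, (u r * Y r o - τ) * P r = 0) := by
  obtain ⟨hπ, hQ, hP, hXc, hYc, hκ⟩ := hdual
  obtain ⟨hslack, hvi, hur⟩ := hprimal
  have keyX : ∀ i, ∑ j, X i j * π j = X i o - Q i * X i o := fun i => by linarith [hXc i]
  have keyY : ∀ r, ∑ j, Y r j * π j = Y r o + P r * Y r o := fun r => by linarith [hYc r]
  have h1 : ∑ j, ((∑ i, v i * X i j) - (∑ r, u r * Y r j) + w) * π j
      = (∑ i, v i * ∑ j, X i j * π j) - (∑ r, u r * ∑ j, Y r j * π j) + w * ∑ j, π j := by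
    simp only [sub_mul, add_mul, Finset.sum_sub_distrib, Finset.sum_add_distrib,
      Finset.sum_mul, Finset.mul_sum, mul_assoc]
    rw [Finset.sum_comm (f := fun (j : J) (i : I) => v i * (X i j * π j)),
      Finset.sum_comm (f := fun (j : J) (r : R) => u r * (Y r j * π j))]
  have h2 : ∑ i, (v i * X i o - τ) * Q i = (∑ i, v i * (Q i * X i o)) - τ * ∑ i, Q i := by
    rw [Finset.mul_sum, ← Finset.sum_sub_distrib]
    congr 1; ext i; ring
  have h3 : ∑ r, (u r * Y r o - τ) * P r = (∑ r, u r * (P r * Y r o)) - τ * ∑ r, P r := by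
    rw [Finset.mul_sum, ← Finset.sum_sub_distrib]
    congr 1; ext r; ring
  have hsum0 : (∑ j, ((∑ i, v i * X i j) - (∑ r, u r * Y r j) + w) * π j)
      + (∑ i, (v i * X i o - τ) * Q i) + (∑ r, (u r * Y r o - τ) * P r) = 0 := by
    rw [h1, h2, h3]
    simp_rw [keyX, keyY, hκ, mul_sub, mul_add, Finset.sum_sub_distrib, Finset.sum_add_distrib]
    linarith [heq]
  have hA : ∀ j, 0 ≤ ((∑ i, v i * X i j) - (∑ r, u r * Y r j) + w) * π j :=
    fun j => mul_nonneg (hslack j) (hπ j)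
  have hB : ∀ i, 0 ≤ (v i * X i o - τ) * Q i := fun i =>
    mul_nonneg (by have := hvi i; linarith [mul_comm (v i) (X i o)]) (hQ i)
  have hC : ∀ r, 0 ≤ (u r * Y r o - τ) * P r := fun r =>
    mul_nonneg (by have := hur r; linarith [mul_comm (u r) (Y r o)]) (hP r)
  have hAsum : 0 ≤ ∑ j, ((∑ i, v i * X i j) - (∑ r, u r * Y r j) + w) * π j :=
    Finset.sum_nonneg fun j _ => hA j
  have hBsum : 0 ≤ ∑ i, (v i * X i o - τ) * Q i := Finset.sum_nonneg fun i _ => hB i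
  have hCsum : 0 ≤ ∑ r, (u r * Y r o - τ) * P r := Finset.sum_nonneg fun r _ => hC r
  refine ⟨?_, ?_, ?_⟩
  · intro j
    have : ∑ j, ((∑ i, v i * X i j) - (∑ r, u r * Y r j) + w) * π j = 0 := by linarith
    exact (Finset.sum_eq_zero_iff_of_nonneg (fun j _ => hA j)).1 this j (Finset.mem_univ j)
  · intro i
    have : ∑ i, (v i * X i o - τ) * Q i = 0 := by linarith
    exact (Finset.sum_eq_zero_iff_of_nonneg (fun i _ => hB i)).1 this i (Finset.mem_univ i)
  · intro r
    have : ∑ r, (u r * Y r o - τ) * P r = 0 := by linarith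
    exact (Finset.sum_eq_zero_iff_of_nonneg (fun r _ => hC r)).1 this r (Finset.mem_univ r)
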